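/- For a twice continuously differentiable function f : ℝ³ → ℝ of variables (φ, θ, z), define the first-order operators X̄f = cos(θ−z)·∂_φ f + (1/2)·sin(z−θ)·(cot(φ/2) + tan(φ/2))·∂_θ f + tan(φ/2)·sin(z−θ)·∂_z f and Ȳf = sin(θ−z)·∂_φ f + (1/2)·cos(θ−z)·(cot(φ/2) + tan(φ/2))·∂_θ f + tan(φ/2)·cos(z−θ)·∂_z f. Then at every point p = (φ, θ, z) with sin φ ≠ 0, and for every f that is C² on a neighbourhood of p: X̄(X̄f)(p) + Ȳ(Ȳf)(p) = ∂²_{φφ}f(p) + (1/sin²φ)·∂²_{θθ}f(p) + tan²(φ/2)·∂²_{zz}f(p) + (1/cos²(φ/2))·∂²_{θz}f(p) + cot(φ)·∂_φ f(p). (X̄ and Ȳ are the left-invariant vector fields of SU(2) in cylindrical coordinates, and the right-hand side is twice the subLaplacian of SU(2).) -/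

import Mathlib

/-- Partial derivative of `f : ℝ³ → ℝ` in the `i`-th coordinate direction. -/
noncomputable def pd (i : Fin 3) (f : (Fin 3 → ℝ) → ℝ) : (Fin 3 → ℝ) → ℝ :=
  fun p => fderiv ℝ f p (Pi.single i 1)

/-- The left-invariant vector field `X̄` of `SU(2)` in cylindrical coordinates
`p = (φ, θ, z)`, acting on functions. -/
noncomputable def Xbar (f : (Fin 3 → ℝ) → ℝ) : (Fin 3 → ℝ) → ℝ := fun p =>
  Real.cos (p 1 - p 2) * pd 0 f p +
    1 / 2 * Real.sin (p 2 - p 1) * (Real.cot (p 0 / 2) + Real.tan (p 0 / 2)) * pd 1 f p +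
    Real.tan (p 0 / 2) * Real.sin (p 2 - p 1) * pd 2 f p

/-- The left-invariant vector field `Ȳ` of `SU(2)` in cylindrical coordinates
`p = (φ, θ, z)`, acting on functions. -/
noncomputable def Ybar (f : (Fin 3 → ℝ) → ℝ) : (Fin 3 → ℝ) → ℝ := fun p =>
  Real.sin (p 1 - p 2) * pd 0 f p +
    1 / 2 * Real.cos (p 1 - p 2) * (Real.cot (p 0 / 2) + Real.tan (p 0 / 2)) * pd 1 f p +
    Real.tan (p 0 / 2) * Real.cos (p 2 - p 1) * pd 2 f p

noncomputable def P (i : Fin 3) : (Fin 3 → ℝ) →L[ℝ] ℝ :=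
  ContinuousLinearMap.proj i

lemma hasF_P (i : Fin 3) (p : Fin 3 → ℝ) : HasFDerivAt (fun q : Fin 3 → ℝ => q i) (P i) p :=
  (P i).hasFDerivAt

lemma hasDerivAt_cot' {y : ℝ} (h : Real.sin y ≠ 0) :
    HasDerivAt Real.cot (-(1 / Real.sin y ^ 2)) y := by
  have h1 := (Real.hasDerivAt_cos y).div (Real.hasDerivAt_sin y) h
  have he : Real.cot = Real.cos / Real.sin := by
    funext x; exact Real.cot_eq_cos_div_sin x
  rw [he]
  refine h1.congr_deriv ?_
  have := Real.sin_sq_add_cos_sq y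
  field_simp
  nlinarith [this]

set_option maxHeartbeats 2000000 in
/-- Twice the subLaplacian of `SU(2)` in cylindrical coordinates: at every
point `p = (φ, θ, z)` with `sin φ ≠ 0` and for every `f` that is `C²` near `p`,
`X̄²f + Ȳ²f = ∂²_{φφ}f + (1/sin²φ)∂²_{θθ}f + tan²(φ/2)∂²_{zz}f + (1/cos²(φ/2))∂²_{θz}f
+ cot(φ)∂_φ f`. -/
theorem su2_subLaplacian_cylindrical (p : Fin 3 → ℝ) (hp : Real.sin (p 0) ≠ 0)
    (f : (Fin 3 → ℝ) → ℝ) (hf : ContDiffAt ℝ 2 f p) :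
    Xbar (Xbar f) p + Ybar (Ybar f) p =
      pd 0 (pd 0 f) p + 1 / Real.sin (p 0) ^ 2 * pd 1 (pd 1 f) p +
        Real.tan (p 0 / 2) ^ 2 * pd 2 (pd 2 f) p +
        1 / Real.cos (p 0 / 2) ^ 2 * pd 1 (pd 2 f) p +
        Real.cot (p 0) * pd 0 f p := by
  -- nonvanishing of half-angle sin and cos
  have hsc : Real.sin (p 0) = 2 * Real.sin (p 0 / 2) * Real.cos (p 0 / 2) := by
    have := Real.sin_two_mul (p 0 / 2)
    rw [show 2 * (p 0 / 2) = p 0 by ring] at this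
    linarith
  have hs2 : Real.sin (p 0 / 2) ≠ 0 := fun h => hp (by rw [hsc, h]; ring)
  have hc2 : Real.cos (p 0 / 2) ≠ 0 := fun h => hp (by rw [hsc, h]; ring)
  -- second derivative
  have h1 : ContDiffAt ℝ 1 (fderiv ℝ f) p := hf.fderiv_right (le_refl 2)
  have hF : HasFDerivAt (fderiv ℝ f) (fderiv ℝ (fderiv ℝ f) p) p :=
    (h1.differentiableAt one_ne_zero).hasFDerivAt
  set F := fderiv ℝ (fderiv ℝ f) p with hFdef
  -- derivative of pd k f
  have hpd : ∀ k : Fin 3, HasFDerivAt (pd k f)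
      ((fderiv ℝ f p).comp (0 : (Fin 3 → ℝ) →L[ℝ] (Fin 3 → ℝ)) + F.flip (Pi.single k 1)) p := by
    intro k
    exact hF.clm_apply (hasFDerivAt_const _ _)
  -- coefficient derivatives
  have hq12 : HasFDerivAt (fun q : Fin 3 → ℝ => q 1 - q 2) (P 1 - P 2) p :=
    (hasF_P 1 p).sub (hasF_P 2 p)
  have hq21 : HasFDerivAt (fun q : Fin 3 → ℝ => q 2 - q 1) (P 2 - P 1) p :=
    (hasF_P 2 p).sub (hasF_P 1 p)
  have hcos12 : HasFDerivAt (fun q : Fin 3 → ℝ => Real.cos (q 1 - q 2))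
      ((-Real.sin (p 1 - p 2)) • (P 1 - P 2)) p :=
    by have h := (Real.hasDerivAt_cos (p 1 - p 2)).comp_hasFDerivAt p hq12; exact h
  have hsin12 : HasFDerivAt (fun q : Fin 3 → ℝ => Real.sin (q 1 - q 2))
      ((Real.cos (p 1 - p 2)) • (P 1 - P 2)) p :=
    by have h := (Real.hasDerivAt_sin (p 1 - p 2)).comp_hasFDerivAt p hq12; exact h
  have hsin21 : HasFDerivAt (fun q : Fin 3 → ℝ => Real.sin (q 2 - q 1))
      ((Real.cos (p 2 - p 1)) • (P 2 - P 1)) p :=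
    by have h := (Real.hasDerivAt_sin (p 2 - p 1)).comp_hasFDerivAt p hq21; exact h
  have hcos21 : HasFDerivAt (fun q : Fin 3 → ℝ => Real.cos (q 2 - q 1))
      ((-Real.sin (p 2 - p 1)) • (P 2 - P 1)) p :=
    by have h := (Real.hasDerivAt_cos (p 2 - p 1)).comp_hasFDerivAt p hq21; exact h
  have hhalf : HasFDerivAt (fun q : Fin 3 → ℝ => q 0 / 2) ((2:ℝ)⁻¹ • P 0) p := by
    simpa [div_eq_inv_mul] using ((hasF_P 0 p).const_mul (2:ℝ)⁻¹)
  have htan : HasFDerivAt (fun q : Fin 3 → ℝ => Real.tan (q 0 / 2))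
      ((1 / Real.cos (p 0 / 2) ^ 2) • ((2:ℝ)⁻¹ • P 0)) p :=
    by have h := (Real.hasDerivAt_tan hc2).comp_hasFDerivAt p hhalf; exact h
  have hcot : HasFDerivAt (fun q : Fin 3 → ℝ => Real.cot (q 0 / 2))
      ((-(1 / Real.sin (p 0 / 2) ^ 2)) • ((2:ℝ)⁻¹ • P 0)) p :=
    by have h := (hasDerivAt_cot' hs2).comp_hasFDerivAt p hhalf; exact h
  have hT : HasFDerivAt (fun q : Fin 3 → ℝ => Real.cot (q 0 / 2) + Real.tan (q 0 / 2))
      ((-(1 / Real.sin (p 0 / 2) ^ 2)) • ((2:ℝ)⁻¹ • P 0)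
        + (1 / Real.cos (p 0 / 2) ^ 2) • ((2:ℝ)⁻¹ • P 0)) p := hcot.add htan
  -- X̄ f and Ȳ f have explicit derivatives at p
  have hXf : HasFDerivAt (Xbar f) _ p :=
    ((hcos12.mul (hpd 0)).add (((hsin21.const_mul (1/2)).mul hT).mul (hpd 1))).add
      ((htan.mul hsin21).mul (hpd 2))
  have hYf : HasFDerivAt (Ybar f) _ p :=
    ((hsin12.mul (hpd 0)).add (((hcos12.const_mul (1/2)).mul hT).mul (hpd 1))).add
      ((htan.mul hcos21).mul (hpd 2))
  have dX := hXf.fderiv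
  have dY := hYf.fderiv
  simp only [Xbar, Ybar, pd] at dX dY ⊢
  rw [dX, dY]
  simp only [ContinuousLinearMap.add_apply, ContinuousLinearMap.smul_apply,
    ContinuousLinearMap.coe_comp', Function.comp_apply, ContinuousLinearMap.zero_apply,
    ContinuousLinearMap.flip_apply, ContinuousLinearMap.sub_apply, smul_eq_mul,
    P, ContinuousLinearMap.proj_apply, Pi.single_apply, map_zero, Fin.reduceEq]
  norm_num
  rw [(hpd 0).fderiv, (hpd 1).fderiv, (hpd 2).fderiv]
  simp only [ContinuousLinearMap.add_apply, ContinuousLinearMap.smul_apply,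
    ContinuousLinearMap.coe_comp', Function.comp_apply, ContinuousLinearMap.zero_apply,
    ContinuousLinearMap.flip_apply, smul_eq_mul, map_zero, mul_zero, zero_add]
  have hsym := hf.isSymmSndFDerivAt (by simp [minSmoothness_of_isRCLikeNormedField])
  have e10 : (F (Pi.single 1 1)) (Pi.single 0 1) = (F (Pi.single 0 1)) (Pi.single 1 1) :=
    hsym.eq _ _
  have e20 : (F (Pi.single 2 1)) (Pi.single 0 1) = (F (Pi.single 0 1)) (Pi.single 2 1) :=
    hsym.eq _ _
  have e21x : (F (Pi.single 2 1)) (Pi.single 1 1) = (F (Pi.single 1 1)) (Pi.single 2 1) :=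
    hsym.eq _ _
  rw [e10, e20, e21x]
  clear hXf hYf dX dY hpd hF h1 hT hcot htan hhalf hcos21 hsin21 hsin12 hcos12 hq12 hq21 hsym e10 e20 e21x hf
  have e21 : p 2 - p 1 = -(p 1 - p 2) := by ring
  have hcc : Real.cos (p 0) = Real.cos (p 0 / 2) ^ 2 - Real.sin (p 0 / 2) ^ 2 := by
    have h2m := Real.cos_two_mul (p 0 / 2)
    rw [show 2 * (p 0 / 2) = p 0 by ring] at h2m
    linear_combination h2m + Real.sin_sq_add_cos_sq (p 0 / 2)
  rw [e21, Real.sin_neg, Real.cos_neg, Real.cot_eq_cos_div_sin (p 0 / 2),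
    Real.tan_eq_sin_div_cos (p 0 / 2), Real.cot_eq_cos_div_sin (p 0), hcc, hsc]
  have hpy1 := Real.sin_sq_add_cos_sq (p 0 / 2)
  have hpy2 := Real.sin_sq_add_cos_sq (p 1 - p 2)
  set sh := Real.sin (p 0 / 2)
  set ch := Real.cos (p 0 / 2)
  set sd := Real.sin (p 1 - p 2)
  set cd := Real.cos (p 1 - p 2)
  set g0 := (fderiv ℝ f p) (Pi.single (0:Fin 3) 1)
  set g1 := (fderiv ℝ f p) (Pi.single (1:Fin 3) 1)
  set g2 := (fderiv ℝ f p) (Pi.single (2:Fin 3) 1)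
  set H00 := (F (Pi.single (0:Fin 3) 1)) (Pi.single (0:Fin 3) 1)
  set H01 := (F (Pi.single (0:Fin 3) 1)) (Pi.single (1:Fin 3) 1)
  set H02 := (F (Pi.single (0:Fin 3) 1)) (Pi.single (2:Fin 3) 1)
  set H11 := (F (Pi.single (1:Fin 3) 1)) (Pi.single (1:Fin 3) 1)
  set H12 := (F (Pi.single (1:Fin 3) 1)) (Pi.single (2:Fin 3) 1)
  set H22 := (F (Pi.single (2:Fin 3) 1)) (Pi.single (2:Fin 3) 1)
  field_simp
  ring_nf
  linear_combination
    (4*H00*ch^2*sh^2 - 2*ch*sh^3*g0 + 2*ch^2*sh^2*H11 + 4*ch^2*sh^2*H12 + 2*ch^3*sh*g0 +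
      ch^4*H11 + sh^4*H11 + 4*sh^4*H12 + 4*sh^4*H22) * hpy2 +
    (H11*(sh^2 + ch^2 + 1) + 4*sh^2*H12) * hpy1
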